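/- With the notation of the previous item (ω = p + q·1_{(a,b)}, 0 < a < b), the unique locally bounded solution 𝒲^{(ω)} of the ω-scale equation satisfies, for all x ≥ 0, 𝒲^{(ω)}(x) = 𝒲_a^{(p,q)}(x) − q ∫_b^x W^{(p)}(x−z) 𝒲_a^{(p,q)}(z) dz, where 𝒲_a^{(p,q)}(x) = W^{(p)}(x) + q ∫_a^x W^{(p+q)}(x−y) W^{(p)}(y) dy and 𝒲_a^{(p,q)} itself satisfies 𝒲_a^{(p,q)}(x) = W^{(p)}(x) + q ∫_a^x W^{(p)}(x−z) 𝒲_a^{(p,q)}(z) dz for all x ≥ 0. -/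

import Mathlib

open Set MeasureTheory intervalIntegral

def LocallyBdd (f : ℝ → ℝ) : Prop :=
  ∀ K : Set ℝ, IsCompact K → ∃ M : ℝ, ∀ x ∈ K, |f x| ≤ M

lemma OSG_zero_nonpos {W : ℝ → ℝ} (hc : Continuous W) (hneg : ∀ x < (0:ℝ), W x = 0) :
    ∀ x ≤ (0:ℝ), W x = 0 := by
  have h0 : W 0 = 0 := by
    have h1 : Filter.Tendsto W (nhdsWithin 0 (Set.Iio 0)) (nhds (W 0)) :=
      (hc.tendsto 0).mono_left nhdsWithin_le_nhds
    have h2 : Filter.Tendsto W (nhdsWithin 0 (Set.Iio 0)) (nhds 0) := by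
      apply Filter.Tendsto.congr' _ tendsto_const_nhds
      filter_upwards [self_mem_nhdsWithin] with y hy
      exact (hneg y hy).symm
    exact tendsto_nhds_unique h1 h2
  intro x hx
  rcases lt_or_eq_of_le hx with h | h
  · exact hneg x h
  · rw [h]; exact h0

lemma OSG_nonneg {W : ℝ → ℝ} (hc : Continuous W) (hneg : ∀ x < (0:ℝ), W x = 0)
    (hm : MonotoneOn W (Set.Ici 0)) : ∀ x, 0 ≤ W x := by
  intro x
  rcases le_or_gt x 0 with h | h
  · rw [OSG_zero_nonpos hc hneg x h]
  · have := hm (le_refl (0:ℝ)) (le_of_lt h) (le_of_lt h)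
    rw [OSG_zero_nonpos hc hneg 0 le_rfl] at this; exact this

lemma OSG_mono {W : ℝ → ℝ} (hc : Continuous W) (hneg : ∀ x < (0:ℝ), W x = 0)
    (hm : MonotoneOn W (Set.Ici 0)) : ∀ s t : ℝ, s ≤ t → W s ≤ W t := by
  intro s t hst
  rcases le_or_gt s 0 with h | h
  · rw [OSG_zero_nonpos hc hneg s h]; exact OSG_nonneg hc hneg hm t
  · exact hm (le_of_lt h) (le_of_lt (lt_of_lt_of_le h hst)) hst

lemma OSG_cont_param {f : ℝ → ℝ → ℝ} (hf : Continuous fun p : ℝ × ℝ => f p.1 p.2) (c : ℝ) :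
    Continuous fun x => ∫ y in c..x, f x y := by
  exact intervalIntegral.continuous_parametric_intervalIntegral_of_continuous hf continuous_id

lemma OSG_triangle_swap (f : ℝ → ℝ → ℝ) (hf : Continuous fun p : ℝ × ℝ => f p.1 p.2)
    {a x : ℝ} (hax : a ≤ x) :
    (∫ z in a..x, ∫ y in a..z, f z y) = ∫ y in a..x, ∫ z in y..x, f z y := by
  have hS : MeasurableSet (Ioc a x) := measurableSet_Ioc
  haveI : IsFiniteMeasure (volume.restrict (Ioc a x)) :=
    ⟨by rw [Measure.restrict_apply_univ]; exact measure_Ioc_lt_top⟩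
  -- bound on f
  obtain ⟨M, hM⟩ : ∃ M, ∀ p ∈ Icc a x ×ˢ Icc a x, |f p.1 p.2| ≤ M := by
    rcases (isCompact_Icc.prod isCompact_Icc).exists_bound_of_continuousOn
      (hf.continuousOn) with ⟨M, hM⟩
    exact ⟨M, fun p hp => by simpa using hM p hp⟩
  set g : ℝ → ℝ → ℝ := fun z y => if y ≤ z then f z y else 0 with hg
  have hgmeas : StronglyMeasurable (Function.uncurry g) := by
    apply StronglyMeasurable.ite _ (hf.stronglyMeasurable) stronglyMeasurable_const
    exact measurableSet_le measurable_snd measurable_fst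
  have hgint : Integrable (Function.uncurry g)
      ((volume.restrict (Ioc a x)).prod (volume.restrict (Ioc a x))) := by
    apply Integrable.mono' (integrable_const M) hgmeas.aestronglyMeasurable
    rw [Filter.eventually_iff_exists_mem]
    refine ⟨(Ioc a x) ×ˢ (Ioc a x), ?_, ?_⟩
    · rw [Measure.prod_restrict]
      exact self_mem_ae_restrict (hS.prod hS)
    · rintro ⟨z, y⟩ ⟨hz, hy⟩
      simp only [Function.uncurry, g]
      split_ifs
      · exact hM ⟨z, y⟩ ⟨Ioc_subset_Icc_self hz, Ioc_subset_Icc_self hy⟩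
      · simp only [Real.norm_eq_abs, abs_zero]
        calc (0:ℝ) ≤ |f a a| := abs_nonneg _
        _ ≤ M := hM ⟨a,a⟩ ⟨⟨le_rfl, hax⟩, ⟨le_rfl, hax⟩⟩
  have key := integral_integral_swap hgint
  -- LHS conversion
  have h1 : (∫ z in a..x, ∫ y in a..z, f z y)
      = ∫ z in Ioc a x, ∫ y in Ioc a x, g z y := by
    rw [integral_of_le hax]
    apply setIntegral_congr_fun hS
    intro z hz
    have haz : a ≤ z := le_of_lt hz.1
    have : ∀ y, g z y = Set.indicator (Iic z) (f z) y := by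
      intro y; simp [g, Set.indicator_apply, Set.mem_Iic]
    simp_rw [this]
    rw [setIntegral_indicator measurableSet_Iic]
    have : Ioc a x ∩ Iic z = Ioc a z := by
      ext w; simp only [mem_inter_iff, mem_Ioc, mem_Iic]
      constructor
      · rintro ⟨⟨h1, h2⟩, h3⟩; exact ⟨h1, h3⟩
      · rintro ⟨h1, h2⟩; exact ⟨⟨h1, le_trans h2 hz.2⟩, h2⟩
    rw [this, integral_of_le haz]
  have h2 : (∫ y in a..x, ∫ z in y..x, f z y)
      = ∫ y in Ioc a x, ∫ z in Ioc a x, g z y := by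
    rw [integral_of_le hax]
    apply setIntegral_congr_fun hS
    intro y hy
    have hyx : y ≤ x := hy.2
    have : ∀ z, g z y = Set.indicator (Ici y) (fun z => f z y) z := by
      intro z; simp [g, Set.indicator_apply, Set.mem_Ici]
    simp_rw [this]
    rw [setIntegral_indicator measurableSet_Ici]
    have hseq : Ioc a x ∩ Ici y = Icc y x := by
      ext w; simp only [mem_inter_iff, mem_Ioc, mem_Ici, mem_Icc]
      constructor
      · rintro ⟨⟨h1, h2⟩, h3⟩; exact ⟨h3, h2⟩
      · rintro ⟨h1, h2⟩; exact ⟨⟨lt_of_lt_of_le hy.1 h1, h2⟩, h1⟩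
    rw [hseq, integral_of_le hyx, integral_Icc_eq_integral_Ioc]
  rw [h1, h2]
  exact key

lemma OSG_part1 {a q : ℝ} (Wp Wpq : ℝ → ℝ)
    (hWpcont : Continuous Wp) (hWpqcont : Continuous Wpq)
    (hWpneg : ∀ x ≤ (0:ℝ), Wp x = 0) (hWpqneg : ∀ x ≤ (0:ℝ), Wpq x = 0)
    (hres : ∀ x ≥ (0:ℝ), Wpq x - Wp x = q * ∫ y in (0:ℝ)..x, Wpq (x - y) * Wp y) :
    ∀ x ≥ (0:ℝ), (Wp x + q * ∫ y in a..x, Wpq (x - y) * Wp y) =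
      Wp x + q * ∫ z in a..x, Wp (x - z) * (Wp z + q * ∫ y in a..z, Wpq (z - y) * Wp y) := by
  intro x hx
  have main : (∫ y in a..x, Wpq (x - y) * Wp y) =
      ∫ z in a..x, Wp (x - z) * (Wp z + q * ∫ y in a..z, Wpq (z - y) * Wp y) := by
    rcases le_or_gt a x with hax | hax
    · -- main case a ≤ x
      have hcontInner : Continuous fun z => ∫ y in a..z, Wpq (z - y) * Wp y :=
        OSG_cont_param (f := fun z y => Wpq (z - y) * Wp y)
          (by fun_prop) a
      -- expand the product
      have e1 : (∫ z in a..x, Wp (x - z) * (Wp z + q * ∫ y in a..z, Wpq (z - y) * Wp y)) =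
          (∫ z in a..x, Wp (x - z) * Wp z) +
          q * ∫ z in a..x, ∫ y in a..z, Wp (x - z) * (Wpq (z - y) * Wp y) := by
        have : (∫ z in a..x, Wp (x - z) * (Wp z + q * ∫ y in a..z, Wpq (z - y) * Wp y)) =
            ∫ z in a..x, (Wp (x - z) * Wp z +
              q * ∫ y in a..z, Wp (x - z) * (Wpq (z - y) * Wp y)) := by
          apply integral_congr
          intro z _
          dsimp only
          rw [intervalIntegral.integral_const_mul]
          ring
        rw [this, intervalIntegral.integral_add, intervalIntegral.integral_const_mul]
        · apply Continuous.intervalIntegrable; fun_prop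
        · apply Continuous.intervalIntegrable
          have : Continuous fun z => ∫ y in a..z, Wp (x - z) * (Wpq (z - y) * Wp y) := by
            exact OSG_cont_param (f := fun z y => Wp (x - z) * (Wpq (z - y) * Wp y))
              (by fun_prop) a
          exact continuous_const.mul this
      rw [e1]
      -- swap the double integral
      rw [OSG_triangle_swap (fun z y => Wp (x - z) * (Wpq (z - y) * Wp y)) (by fun_prop) hax]
      -- simplify the inner integral for y in [a,x]
      have e2 : (∫ y in a..x, ∫ z in y..x, Wp (x - z) * (Wpq (z - y) * Wp y)) =
          ∫ y in a..x, Wp y * ∫ s in (0:ℝ)..(x - y), Wpq ((x - y) - s) * Wp s := by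
        apply integral_congr
        intro y hy
        dsimp only
        rw [uIcc_of_le hax] at hy
        have h1 : (∫ z in y..x, Wp (x - z) * (Wpq (z - y) * Wp y)) =
            Wp y * ∫ z in y..x, Wp (x - z) * Wpq (z - y) := by
          rw [← intervalIntegral.integral_const_mul]
          apply integral_congr
          intro z _
          ring
        rw [h1]
        congr 1
        -- shift z ↦ z - y
        have h2 : (∫ z in y..x, Wp (x - z) * Wpq (z - y)) =
            ∫ s in (y - y)..(x - y), Wp ((x - y) - s) * Wpq s := by
          rw [← integral_comp_sub_right (fun s => Wp ((x - y) - s) * Wpq s) y]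
          apply integral_congr
          intro z _
          congr 2
          ring
        rw [h2, sub_self]
        -- reflection s ↦ (x-y) - s
        have h3 : (∫ s in (0:ℝ)..(x - y), Wp ((x - y) - s) * Wpq s) =
            ∫ t in ((x-y) - (x-y))..((x-y) - 0), Wp t * Wpq ((x - y) - t) := by
          rw [← integral_comp_sub_left (fun t => Wp t * Wpq ((x - y) - t)) (x - y)]
          apply integral_congr
          intro s _
          congr 2
          ring
        rw [h3, sub_self, sub_zero]
        apply integral_congr
        intro t _
        ring
      rw [e2]
      -- use the resolvent identity
      have e3 : (q * ∫ y in a..x, Wp y * ∫ s in (0:ℝ)..(x - y), Wpq ((x - y) - s) * Wp s) =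
          ∫ y in a..x, Wp y * (Wpq (x - y) - Wp (x - y)) := by
        rw [← intervalIntegral.integral_const_mul]
        apply integral_congr
        intro y hy
        dsimp only
        rw [uIcc_of_le hax] at hy
        have hxy : (0:ℝ) ≤ x - y := by linarith [hy.2]
        rw [hres (x - y) hxy]
        ring
      rw [e3]
      rw [← intervalIntegral.integral_add
        (by apply Continuous.intervalIntegrable (E := ℝ); fun_prop)
        (by apply Continuous.intervalIntegrable (E := ℝ); fun_prop)]
      apply integral_congr
      intro y _
      dsimp only
      ring
    · -- degenerate case x < a : both sides vanish
      have hI : Set.uIcc a x = Set.Icc x a := uIcc_of_ge (le_of_lt hax)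
      have e1 : (∫ y in a..x, Wpq (x - y) * Wp y) = ∫ y in a..x, (0:ℝ) := by
        apply integral_congr
        intro y hy
        dsimp only
        rw [hI] at hy
        rw [hWpqneg (x - y) (by linarith [hy.1]), zero_mul]
      have e2 : (∫ z in a..x, Wp (x - z) * (Wp z + q * ∫ y in a..z, Wpq (z - y) * Wp y)) =
          ∫ z in a..x, (0:ℝ) := by
        apply integral_congr
        intro z hz
        dsimp only
        rw [hI] at hz
        rw [hWpneg (x - z) (by linarith [hz.1]), zero_mul]
      rw [e1, e2]
  rw [main]

lemma OSG_H1 {a b x : ℝ} (ha : 0 < a) (hab : a ≤ b) (hx : 0 ≤ x) (g : ℝ → ℝ)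
    (hg : ∀ z, x < z → g z = 0) :
    (∫ z in (0:ℝ)..x, Set.indicator (Set.Ioo a b) g z) = ∫ z in a..b, g z := by
  rw [integral_of_le hx, integral_of_le hab]
  rw [setIntegral_indicator measurableSet_Ioo]
  rw [← MeasureTheory.integral_indicator (measurableSet_Ioc.inter measurableSet_Ioo)]
  rw [← MeasureTheory.integral_indicator measurableSet_Ioc]
  apply MeasureTheory.integral_congr_ae
  have hb : ∀ᵐ z : ℝ, z ≠ b := by
    rw [MeasureTheory.ae_iff]
    have : {z : ℝ | ¬ z ≠ b} = {b} := by ext z; simp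
    rw [this]
    exact measure_singleton b
  filter_upwards [hb] with z hz
  by_cases h1 : z ∈ Set.Ioo a b
  · have hzab : z ∈ Set.Ioc a b := ⟨h1.1, le_of_lt h1.2⟩
    by_cases h2 : z ∈ Set.Ioc (0:ℝ) x
    · rw [Set.indicator_of_mem (Set.mem_inter h2 h1), Set.indicator_of_mem hzab]
    · have hxz : x < z := by
        rcases h1 with ⟨h1a, h1b⟩
        by_contra hcon
        push_neg at hcon
        exact h2 ⟨lt_trans ha h1a, hcon⟩
      rw [Set.indicator_of_notMem (fun hc => h2 hc.1), Set.indicator_of_mem hzab,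
        hg z hxz]
  · rw [Set.indicator_of_notMem (fun hc => h1 hc.2)]
    have : z ∉ Set.Ioc a b := by
      intro hc
      rcases lt_or_eq_of_le hc.2 with h | h
      · exact h1 ⟨hc.1, h⟩
      · exact hz h
    rw [Set.indicator_of_notMem this]

lemma OSG_Geq {a b q : ℝ} (ha : 0 < a) (hab : a < b) (Wp F : ℝ → ℝ)
    (hWpcont : Continuous Wp) (hFcont : Continuous F)
    (hWpneg : ∀ x ≤ (0:ℝ), Wp x = 0)
    (hFeq : ∀ x ≥ (0:ℝ), F x = Wp x + q * ∫ z in a..x, Wp (x - z) * F z) :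
    ∀ x ≥ (0:ℝ),
    (F x - q * ∫ z in b..x, Wp (x - z) * F z) = Wp x +
      q * ∫ z in (0:ℝ)..x, Wp (x - z) * Set.indicator (Set.Ioo a b) (fun _ => (1:ℝ)) z *
        (F z - q * ∫ w in b..z, Wp (z - w) * F w) := by
  have hGF : ∀ z ≤ b, (F z - q * ∫ w in b..z, Wp (z - w) * F w) = F z := by
    intro z hzb
    have : (∫ w in b..z, Wp (z - w) * F w) = ∫ w in b..z, (0:ℝ) := by
      apply integral_congr
      intro w hw
      dsimp only
      rw [uIcc_of_ge hzb] at hw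
      rw [hWpneg (z - w) (by linarith [hw.1]), zero_mul]
    rw [this]
    simp
  intro x hx
  have hpt : ∀ z : ℝ, Wp (x - z) * Set.indicator (Set.Ioo a b) (fun _ => (1:ℝ)) z *
      (F z - q * ∫ w in b..z, Wp (z - w) * F w) =
      Set.indicator (Set.Ioo a b) (fun z => Wp (x - z) * F z) z := by
    intro z
    by_cases h1 : z ∈ Set.Ioo a b
    · rw [Set.indicator_of_mem h1, Set.indicator_of_mem h1, hGF z (le_of_lt h1.2)]
      ring
    · rw [Set.indicator_of_notMem h1, Set.indicator_of_notMem h1]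
      ring
  have hint : (∫ z in (0:ℝ)..x, Wp (x - z) * Set.indicator (Set.Ioo a b) (fun _ => (1:ℝ)) z *
      (F z - q * ∫ w in b..z, Wp (z - w) * F w)) =
      ∫ z in a..b, Wp (x - z) * F z := by
    rw [integral_congr (g := fun z => Set.indicator (Set.Ioo a b) (fun z => Wp (x - z) * F z) z)
      (fun z _ => hpt z)]
    exact OSG_H1 ha (le_of_lt hab) hx _
      (fun z hz => by rw [hWpneg (x - z) (by linarith), zero_mul])
  rw [hint]
  have hchasles : (∫ z in a..b, Wp (x - z) * F z) =
      (∫ z in a..x, Wp (x - z) * F z) - ∫ z in b..x, Wp (x - z) * F z := by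
    have := intervalIntegral.integral_add_adjacent_intervals
      (a := a) (b := b) (c := x)
      (by apply Continuous.intervalIntegrable (E := ℝ); fun_prop)
      (by apply Continuous.intervalIntegrable (E := ℝ); fun_prop)
      (f := fun z => Wp (x - z) * F z) (μ := volume)
    linarith [this]
  rw [hchasles, hFeq x hx]
  ring

lemma OSG_intInt_of_bdd {f : ℝ → ℝ} {u v C : ℝ} (huv : u ≤ v)
    (hm : AEStronglyMeasurable f (volume.restrict (Set.Ioc u v)))
    (hC : ∀ z ∈ Set.Ioc u v, |f z| ≤ C) :
    IntervalIntegrable f volume u v := by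
  rw [intervalIntegrable_iff, uIoc_of_le huv]
  apply Integrable.mono' (integrable_const C) hm
  filter_upwards [self_mem_ae_restrict measurableSet_Ioc] with z hz
  simpa using hC z hz

-- upward closure of integrability of the 𝒲-integrand, assuming Wp global monotone & nonneg
lemma OSG_P_down {Wp g : ℝ → ℝ} (hWpcont : Continuous Wp)
    (hWpnn : ∀ t, 0 ≤ Wp t) (hWpmono : ∀ s t : ℝ, s ≤ t → Wp s ≤ Wp t)
    {x x' : ℝ} (hx : 0 ≤ x) (hxx' : x ≤ x')
    (hP : IntervalIntegrable (fun z => Wp (x' - z) * g z) volume 0 x') :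
    IntervalIntegrable (fun z => Wp (x - z) * g z) volume 0 x := by
  rw [intervalIntegrable_iff, uIoc_of_le (le_trans hx hxx')] at hP
  have hP2 : IntegrableOn (fun z => Wp (x' - z) * g z) (Set.Ioc 0 x) volume :=
    hP.mono_set (Set.Ioc_subset_Ioc_right hxx')
  rw [intervalIntegrable_iff, uIoc_of_le hx]
  have hratio : Measurable fun z => Wp (x - z) * (Wp (x' - z))⁻¹ := by
    apply Measurable.mul
    · exact (hWpcont.comp (continuous_const.sub continuous_id)).measurable
    · exact (hWpcont.comp (continuous_const.sub continuous_id)).measurable.inv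
  have hax : ∀ᵐ z ∂(volume.restrict (Set.Ioc 0 x)), z ≠ x := by
    apply Filter.Eventually.filter_mono (ae_mono Measure.restrict_le_self)
    rw [MeasureTheory.ae_iff]
    have : {z : ℝ | ¬ z ≠ x} = {x} := by ext z; simp
    rw [this]; exact measure_singleton x
  have hmeas : AEStronglyMeasurable (fun z => Wp (x - z) * g z)
      (volume.restrict (Set.Ioc 0 x)) := by
    have h1 : AEStronglyMeasurable (fun z => (Wp (x - z) * (Wp (x' - z))⁻¹) *
        (Wp (x' - z) * g z)) (volume.restrict (Set.Ioc 0 x)) :=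
      hratio.aestronglyMeasurable.mul hP2.aestronglyMeasurable
    apply h1.congr
    filter_upwards [self_mem_ae_restrict measurableSet_Ioc, hax] with z hz hzx
    have hzlt : z < x := lt_of_le_of_ne hz.2 hzx
    rcases eq_or_lt_of_le (hWpnn (x' - z)) with h0 | h0
    · have : Wp (x - z) = 0 := by
        have h1 : Wp (x - z) ≤ Wp (x' - z) := hWpmono _ _ (by linarith)
        have h2 := hWpnn (x - z)
        linarith [h0.symm ▸ h1]
      rw [this]; rw [← h0]; ring
    · field_simp
  apply Integrable.mono hP2 hmeas
  filter_upwards [self_mem_ae_restrict measurableSet_Ioc] with z hz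
  simp only [Real.norm_eq_abs, abs_mul]
  apply mul_le_mul_of_nonneg_right _ (abs_nonneg _)
  rw [abs_of_nonneg (hWpnn _), abs_of_nonneg (hWpnn _)]
  exact hWpmono _ _ (by linarith)

lemma OSG_allP {Wp g g₀ : ℝ → ℝ} (hWpcont : Continuous Wp)
    (hWpnn : ∀ t, 0 ≤ Wp t) (hWpmono : ∀ s t : ℝ, s ≤ t → Wp s ≤ Wp t)
    (hWppos : ∀ r : ℝ, 0 < r → 0 < Wp r)
    (hg₀ : Measurable g₀)
    (hbdd : ∀ N : ℝ, ∃ M, ∀ z ∈ Set.Icc (0:ℝ) N, |g z| ≤ M)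
    (hforce : ∀ x, 0 ≤ x →
      ¬ IntervalIntegrable (fun z => Wp (x - z) * g z) volume 0 x → g x = g₀ x) :
    ∀ x, 0 ≤ x → IntervalIntegrable (fun z => Wp (x - z) * g z) volume 0 x := by
  intro x hx
  by_contra hbad
  set S := {y : ℝ | 0 ≤ y ∧ ¬ IntervalIntegrable (fun z => Wp (y - z) * g z) volume 0 y}
    with hSdef
  have hSx : x ∈ S := ⟨hx, hbad⟩
  have hSne : S.Nonempty := ⟨x, hSx⟩
  have hSbdd : BddBelow S := ⟨0, fun y hy => hy.1⟩
  set β := sInf S with hβdef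
  have hβ0 : 0 ≤ β := le_csInf hSne (fun y hy => hy.1)
  have hup : ∀ y, β < y → ¬ IntervalIntegrable (fun z => Wp (y - z) * g z) volume 0 y := by
    intro y hy hPy
    obtain ⟨s, hsS, hsy⟩ := (csInf_lt_iff hSbdd hSne).1 hy
    exact hsS.2 (OSG_P_down hWpcont hWpnn hWpmono hsS.1 (le_of_lt hsy) hPy)
  have hforceβ : ∀ y, β < y → g y = g₀ y := fun y hy =>
    hforce y (le_trans hβ0 (le_of_lt hy)) (hup y hy)
  have hPlt : ∀ y, 0 ≤ y → y < β →
      IntervalIntegrable (fun z => Wp (y - z) * g z) volume 0 y := by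
    intro y hy0 hyβ
    by_contra h
    exact (notMem_of_lt_csInf hyβ hSbdd) ⟨hy0, h⟩
  -- g is a.e.-measurable on Ioc 0 y for every 0 ≤ y < β
  have hgm : ∀ y, 0 ≤ y → y < β → AEMeasurable g (volume.restrict (Set.Ioc 0 y)) := by
    intro y hy0 hyβ
    have hm : AEMeasurable (fun z => Wp (y - z) * g z) (volume.restrict (Set.Ioc 0 y)) :=
      (hPlt y hy0 hyβ).1.aestronglyMeasurable.aemeasurable
    have hinv : AEMeasurable (fun z => (Wp (y - z))⁻¹ * (Wp (y - z) * g z))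
        (volume.restrict (Set.Ioc 0 y)) :=
      ((hWpcont.comp (continuous_const.sub continuous_id)).measurable.inv.aemeasurable).mul hm
    apply hinv.congr
    have hay : ∀ᵐ z ∂(volume.restrict (Set.Ioc 0 y)), z ≠ y := by
      apply Filter.Eventually.filter_mono (ae_mono Measure.restrict_le_self)
      rw [MeasureTheory.ae_iff]
      have : {z : ℝ | ¬ z ≠ y} = {y} := by ext z; simp
      rw [this]; exact measure_singleton y
    filter_upwards [self_mem_ae_restrict measurableSet_Ioc, hay] with z hz hzy
    have : 0 < Wp (y - z) := hWppos _ (by rcases hz with ⟨h1, h2⟩; have := lt_of_le_of_ne h2 hzy; linarith)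
    field_simp
  -- hence a.e.-measurable on Ioo 0 β
  have hgmβ : AEMeasurable g (volume.restrict (Set.Ioo 0 β)) := by
    rcases le_or_gt β 0 with hβneg | hβpos
    · rw [Set.Ioo_eq_empty (by intro hc; linarith), Measure.restrict_empty]
      exact aemeasurable_zero_measure
    · have hcover : Set.Ioo 0 β ⊆ ⋃ n : ℕ, Set.Ioc 0 (β - β / (n + 2)) := by
        intro z hz
        obtain ⟨n, hn⟩ := exists_nat_gt (β / (β - z))
        refine Set.mem_iUnion.2 ⟨n, hz.1, ?_⟩
        have hβz : 0 < β - z := by linarith [hz.2]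
        have hn2 : (0:ℝ) < (n:ℝ) + 2 := by positivity
        have h1 : β / (β - z) < (n:ℝ) + 2 := by linarith
        have h2 : β < (β - z) * ((n:ℝ) + 2) := by
          rw [div_lt_iff₀ hβz] at h1
          linarith [h1]
        have h3 : β / ((n:ℝ) + 2) < β - z := by
          rw [div_lt_iff₀ hn2]
          linarith [h2]
        linarith
      have hall : AEMeasurable g (volume.restrict (⋃ n : ℕ, Set.Ioc 0 (β - β / (n + 2)))) := by
        rw [aemeasurable_iUnion_iff]
        intro n
        have hn2 : (1:ℝ) ≤ (n:ℝ) + 2 := by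
          have : (0:ℝ) ≤ (n:ℝ) := Nat.cast_nonneg n
          linarith
        have hnn : 0 ≤ β - β / (n + 2) := by
          have := div_le_self (le_of_lt hβpos) hn2
          push_cast
          linarith [this]
        have hlt : β - β / ((n:ℝ) + 2) < β := by
          have : 0 < β / ((n:ℝ)+2) := by positivity
          linarith
        have := hgm _ hnn (by push_cast; linarith [hlt])
        convert this using 3 <;> push_cast <;> ring
      exact hall.mono_measure (Measure.restrict_mono hcover le_rfl)
  -- finish: prove integrability at x' := max x (β+1), contradiction
  set x' := max x (β + 1) with hx'def
  have hβx' : β < x' := lt_of_lt_of_le (by linarith) (le_max_right _ _)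
  have hgmx' : AEMeasurable g (volume.restrict (Set.Ioc 0 x')) := by
    have h2 : AEMeasurable g (volume.restrict (Set.Icc β x')) := by
      have haβ : ∀ᵐ z ∂(volume.restrict (Set.Icc β x')), z ≠ β := by
        apply Filter.Eventually.filter_mono (ae_mono Measure.restrict_le_self)
        rw [MeasureTheory.ae_iff]
        have : {z : ℝ | ¬ z ≠ β} = {β} := by ext z; simp
        rw [this]; exact measure_singleton β
      apply (hg₀.aemeasurable (μ := volume.restrict (Set.Icc β x'))).congr
      filter_upwards [self_mem_ae_restrict measurableSet_Icc, haβ] with z hz hzβ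
      exact (hforceβ z (lt_of_le_of_ne hz.1 (Ne.symm hzβ))).symm
    have hu : AEMeasurable g (volume.restrict (Set.Ioo 0 β ∪ Set.Icc β x')) :=
      aemeasurable_union_iff.2 ⟨hgmβ, h2⟩
    apply hu.mono_measure
    apply Measure.restrict_mono _ le_rfl
    intro z hz
    rcases lt_or_ge z β with h | h
    · exact Or.inl ⟨hz.1, h⟩
    · exact Or.inr ⟨h, hz.2⟩
  obtain ⟨M, hM⟩ := hbdd x'
  set M' := max M 0 with hM'def
  have hPx' : IntervalIntegrable (fun z => Wp (x' - z) * g z) volume 0 x' := by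
    apply OSG_intInt_of_bdd (le_trans hβ0 (le_of_lt hβx')) (C := Wp x' * M')
    · apply aestronglyMeasurable_iff_aemeasurable.2
      exact ((hWpcont.comp (continuous_const.sub continuous_id)).measurable.aemeasurable).mul hgmx'
    · intro z hz
      rw [abs_mul, abs_of_nonneg (hWpnn _)]
      apply mul_le_mul
      · exact hWpmono _ _ (by linarith [hz.1])
      · exact le_trans (hM z ⟨le_of_lt hz.1, hz.2⟩) (le_max_left _ _)
      · exact abs_nonneg _
      · exact hWpnn _
  exact hup x' hβx' hPx'

lemma OSG_gronwall {a b q : ℝ} (ha : 0 < a) (hab : a < b) (hq : 0 ≤ q)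
    (Wp 𝒲 G : ℝ → ℝ) (hWpcont : Continuous Wp)
    (hWpnn : ∀ t, 0 ≤ Wp t) (hWpmono : ∀ s t : ℝ, s ≤ t → Wp s ≤ Wp t)
    (hGcont : Continuous G)
    (h𝒲bdd : ∀ N : ℝ, ∃ M, ∀ z ∈ Set.Icc (0:ℝ) N, |𝒲 z| ≤ M)
    (hP : ∀ x, 0 ≤ x → IntervalIntegrable
      (fun z => Wp (x - z) * Set.indicator (Set.Ioo a b) (fun _ => (1:ℝ)) z * 𝒲 z) volume 0 x)
    (heq : ∀ x ≥ (0:ℝ), 𝒲 x = Wp x +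
      q * ∫ z in (0:ℝ)..x, Wp (x - z) * Set.indicator (Set.Ioo a b) (fun _ => (1:ℝ)) z * 𝒲 z)
    (hGeq : ∀ x ≥ (0:ℝ), G x = Wp x +
      q * ∫ z in (0:ℝ)..x, Wp (x - z) * Set.indicator (Set.Ioo a b) (fun _ => (1:ℝ)) z * G z) :
    ∀ x ≥ (0:ℝ), 𝒲 x = G x := by
  set ind : ℝ → ℝ := Set.indicator (Set.Ioo a b) (fun _ => (1:ℝ)) with hind
  have hind_nonneg : ∀ z, 0 ≤ ind z := by
    intro z
    rw [hind]
    by_cases h : z ∈ Set.Ioo a b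
    · rw [Set.indicator_of_mem h]; norm_num
    · rw [Set.indicator_of_notMem h]
  have hind_le : ∀ z, ind z ≤ 1 := by
    intro z
    rw [hind]
    by_cases h : z ∈ Set.Ioo a b
    · rw [Set.indicator_of_mem h]
    · rw [Set.indicator_of_notMem h]; norm_num
  have hind_meas : Measurable ind := (measurable_const.indicator measurableSet_Ioo)
  -- integrability of the G-side integrand
  have hGint : ∀ x, 0 ≤ x → IntervalIntegrable
      (fun z => Wp (x - z) * ind z * G z) volume 0 x := by
    intro x hx
    obtain ⟨MG, hMG⟩ := isCompact_Icc.exists_bound_of_continuousOn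
      (s := Set.Icc (0:ℝ) x) hGcont.continuousOn
    apply OSG_intInt_of_bdd hx (C := Wp x * max MG 0)
    · apply Measurable.aestronglyMeasurable
      exact (((hWpcont.comp (continuous_const.sub continuous_id)).measurable.mul
        hind_meas).mul hGcont.measurable)
    · intro z hz
      rw [abs_mul, abs_mul]
      have h1 : |Wp (x - z)| * |ind z| ≤ Wp x := by
        rw [abs_of_nonneg (hWpnn _), abs_of_nonneg (hind_nonneg _)]
        have := mul_le_mul (hWpmono (x - z) x (by linarith [hz.1])) (hind_le z)
          (hind_nonneg z) (hWpnn x)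
        simpa using this
      have h2 : |G z| ≤ max MG 0 :=
        le_trans (by simpa using hMG z ⟨le_of_lt hz.1, hz.2⟩) (le_max_left _ _)
      exact mul_le_mul h1 h2 (abs_nonneg _) (hWpnn x)
  -- key difference identity
  have key : ∀ y, 0 ≤ y → 𝒲 y - G y =
      q * ∫ z in (0:ℝ)..y, Wp (y - z) * ind z * (𝒲 z - G z) := by
    intro y hy
    have hsplit : (∫ z in (0:ℝ)..y, Wp (y - z) * ind z * (𝒲 z - G z)) =
        (∫ z in (0:ℝ)..y, Wp (y - z) * ind z * 𝒲 z) -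
        ∫ z in (0:ℝ)..y, Wp (y - z) * ind z * G z := by
      rw [← intervalIntegral.integral_sub (hP y hy) (hGint y hy)]
      apply integral_congr
      intro z _
      dsimp only
      ring
    rw [hsplit, heq y hy, hGeq y hy]
    ring
  intro x hx
  -- bound on the difference
  obtain ⟨M1, hM1⟩ := h𝒲bdd x
  obtain ⟨M2, hM2⟩ := isCompact_Icc.exists_bound_of_continuousOn
    (s := Set.Icc (0:ℝ) x) hGcont.continuousOn
  set M := M1 + M2 with hM
  have hMb : ∀ y ∈ Set.Icc (0:ℝ) x, |𝒲 y - G y| ≤ M := by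
    intro y hy
    calc |𝒲 y - G y| ≤ |𝒲 y| + |G y| := abs_sub _ _
    _ ≤ M1 + M2 := add_le_add (hM1 y hy) (by simpa using hM2 y hy)
  have hM0 : 0 ≤ M := le_trans (abs_nonneg _) (hMb 0 ⟨le_rfl, hx⟩)
  set C := Wp x with hC
  have hC0 : 0 ≤ C := hWpnn x
  set L := 2 * q * C + 1 with hL
  have hL0 : 0 < L := by positivity
  have claim : ∀ n : ℕ, ∀ y ∈ Set.Icc (0:ℝ) x,
      |𝒲 y - G y| ≤ M * (1/2)^n * Real.exp (L * y) := by
    intro n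
    induction n with
    | zero =>
      intro y hy
      have hE : 1 ≤ Real.exp (L * y) := Real.one_le_exp (mul_nonneg (le_of_lt hL0) hy.1)
      nlinarith [hMb y hy, hM0]
    | succ n ih =>
      intro y hy
      have h0y : 0 ≤ y := hy.1
      have hφint : IntervalIntegrable (fun z => Wp (y - z) * ind z * (𝒲 z - G z)) volume 0 y := by
        have : (fun z => Wp (y - z) * ind z * (𝒲 z - G z)) =
            fun z => (Wp (y - z) * ind z * 𝒲 z) - Wp (y - z) * ind z * G z := by
          funext z; ring
        rw [this]
        exact (hP y h0y).sub (hGint y h0y)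
      have hexp : (∫ z in (0:ℝ)..y, Real.exp (L * z)) = (Real.exp (L * y) - 1) / L := by
        rw [intervalIntegral.integral_comp_mul_left (fun t => Real.exp t) (ne_of_gt hL0)]
        rw [mul_zero, integral_exp, Real.exp_zero, smul_eq_mul]
        ring
      rw [key y h0y, abs_mul, abs_of_nonneg hq]
      calc q * |∫ z in (0:ℝ)..y, Wp (y - z) * ind z * (𝒲 z - G z)|
          ≤ q * ∫ z in (0:ℝ)..y, |Wp (y - z) * ind z * (𝒲 z - G z)| := by
            apply mul_le_mul_of_nonneg_left
              (intervalIntegral.abs_integral_le_integral_abs h0y) hq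
        _ ≤ q * ∫ z in (0:ℝ)..y, C * (M * (1/2)^n * Real.exp (L * z)) := by
            apply mul_le_mul_of_nonneg_left _ hq
            apply intervalIntegral.integral_mono_on h0y hφint.abs
              (by apply Continuous.intervalIntegrable (E := ℝ); fun_prop)
            intro z hz
            rw [abs_mul, abs_mul]
            have h1 : |Wp (y - z)| * |ind z| ≤ C := by
              rw [abs_of_nonneg (hWpnn _), abs_of_nonneg (hind_nonneg _)]
              have := mul_le_mul (hWpmono (y - z) x (by linarith [hz.1, hy.2])) (hind_le z)
                (hind_nonneg z) hC0
              simpa using this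
            exact mul_le_mul h1 (ih z ⟨hz.1, le_trans hz.2 hy.2⟩) (abs_nonneg _) hC0
        _ = q * (C * (M * (1/2)^n) * ((Real.exp (L * y) - 1) / L)) := by
            have hfe : (fun z => C * (M * (1/2)^n * Real.exp (L * z))) =
                fun z => (C * (M * (1/2)^n)) * Real.exp (L * z) := by
              funext z; ring
            rw [hfe, intervalIntegral.integral_const_mul, hexp]
        _ ≤ M * (1/2)^(n+1) * Real.exp (L * y) := by
            have hE : 1 ≤ Real.exp (L * y) :=
              Real.one_le_exp (mul_nonneg (le_of_lt hL0) h0y)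
            set E := Real.exp (L * y) with hEdef
            set A := M * (1/2)^n with hA
            have hA0 : 0 ≤ A := by positivity
            have key2 : q * C * (E - 1) / L ≤ E / 2 := by
              rw [div_le_iff₀ hL0]
              nlinarith [mul_nonneg hq hC0, hE]
            calc q * (C * A * ((E - 1) / L)) = A * (q * C * (E - 1) / L) := by ring
            _ ≤ A * (E / 2) := mul_le_mul_of_nonneg_left key2 hA0
            _ = M * (1/2)^(n+1) * E := by rw [pow_succ]; ring
  have hlim : Filter.Tendsto (fun n : ℕ => M * (1/2)^n * Real.exp (L * x))
      Filter.atTop (nhds 0) := by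
    have h1 : Filter.Tendsto (fun n : ℕ => ((1:ℝ)/2)^n) Filter.atTop (nhds 0) :=
      tendsto_pow_atTop_nhds_zero_of_lt_one (by norm_num) (by norm_num)
    have := (h1.const_mul M).mul_const (Real.exp (L * x))
    simpa using this
  have habs : |𝒲 x - G x| ≤ 0 := by
    apply ge_of_tendsto' hlim
    intro n
    exact claim n x ⟨hx, le_rfl⟩
  have := abs_nonpos_iff.1 habs
  linarith [sub_eq_zero.1 this]

lemma OSG_caseI {a b q r : ℝ} (ha : 0 < a) (hr : 0 < r)
    (Wp 𝒲 G : ℝ → ℝ)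
    (hWpr : ∀ t ≤ r, Wp t = 0)
    (heq : ∀ x ≥ (0:ℝ), 𝒲 x = Wp x +
      q * ∫ z in (0:ℝ)..x, Wp (x - z) * Set.indicator (Set.Ioo a b) (fun _ => (1:ℝ)) z * 𝒲 z)
    (hGeq : ∀ x ≥ (0:ℝ), G x = Wp x +
      q * ∫ z in (0:ℝ)..x, Wp (x - z) * Set.indicator (Set.Ioo a b) (fun _ => (1:ℝ)) z * G z) :
    ∀ x ≥ (0:ℝ), 𝒲 x = G x := by
  have hind0 : ∀ z : ℝ, z ≤ 0 → Set.indicator (Set.Ioo a b) (fun _ => (1:ℝ)) z = 0 := by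
    intro z hz
    apply Set.indicator_of_notMem
    intro hc
    linarith [hc.1]
  have claim : ∀ n : ℕ, ∀ x, 0 ≤ x → x ≤ (n:ℝ) * r → 𝒲 x = G x := by
    intro n
    induction n with
    | zero =>
      intro x hx0 hx1
      have hx : x = 0 := le_antisymm (by simpa using hx1) hx0
      subst hx
      rw [heq 0 le_rfl, hGeq 0 le_rfl, intervalIntegral.integral_same,
        intervalIntegral.integral_same]
    | succ n ih =>
      intro x hx0 hx1
      rcases le_or_gt x ((n:ℝ) * r) with h | h
      · exact ih x hx0 h
      · have hfe : ∀ z, Wp (x - z) * Set.indicator (Set.Ioo a b) (fun _ => (1:ℝ)) z * 𝒲 z =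
            Wp (x - z) * Set.indicator (Set.Ioo a b) (fun _ => (1:ℝ)) z * G z := by
          intro z
          rcases le_or_gt z ((n:ℝ) * r) with hz | hz
          · rcases le_or_gt z 0 with hz0 | hz0
            · rw [hind0 z hz0]; ring
            · rw [ih z (le_of_lt hz0) hz]
          · have : Wp (x - z) = 0 := by
              apply hWpr
              have : x ≤ ((n:ℝ) + 1) * r := by push_cast at hx1; linarith
              linarith
            rw [this]; ring
        rw [heq x hx0, hGeq x hx0]
        congr 1
        congr 1
        exact integral_congr (fun z _ => hfe z)
  intro x hx
  obtain ⟨n, hn⟩ := exists_nat_ge (x / r)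
  apply claim n x hx
  rw [div_le_iff₀ hr] at hn
  linarith

lemma OSG_final {a b q : ℝ} (ha : 0 < a) (hab : a < b) (hq : 0 ≤ q)
    (Wp F 𝒲 : ℝ → ℝ)
    (hWpcont : Continuous Wp) (hFcont : Continuous F)
    (hWpneg' : ∀ x ≤ (0:ℝ), Wp x = 0) (hWpnn : ∀ t, 0 ≤ Wp t)
    (hWpm : ∀ s t : ℝ, s ≤ t → Wp s ≤ Wp t)
    (hFeq : ∀ x ≥ (0:ℝ), F x = Wp x + q * ∫ z in a..x, Wp (x - z) * F z)
    (h𝒲 : LocallyBdd 𝒲)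
    (heq : ∀ x ≥ (0:ℝ), 𝒲 x = Wp x +
      q * ∫ z in (0:ℝ)..x, Wp (x - z) * Set.indicator (Set.Ioo a b) (fun _ => (1:ℝ)) z * 𝒲 z) :
    ∀ x ≥ (0:ℝ), 𝒲 x = F x - q * ∫ z in b..x, Wp (x - z) * F z := by
  set G : ℝ → ℝ := fun u => F u - q * ∫ z in b..u, Wp (u - z) * F z with hGdef
  have hGcont : Continuous G := by
    rw [hGdef]
    apply hFcont.sub
    apply continuous_const.mul
    exact OSG_cont_param (f := fun u z => Wp (u - z) * F z)
      ((hWpcont.comp (continuous_fst.sub continuous_snd)).mul (hFcont.comp continuous_snd)) b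
  have hGeq : ∀ x ≥ (0:ℝ), G x = Wp x +
      q * ∫ z in (0:ℝ)..x, Wp (x - z) * Set.indicator (Set.Ioo a b) (fun _ => (1:ℝ)) z * G z := by
    intro x hx
    have h0 := OSG_Geq ha hab Wp F hWpcont hFcont hWpneg' hFeq x hx
    rw [hGdef]
    exact h0
  have h𝒲bdd : ∀ N : ℝ, ∃ M, ∀ z ∈ Set.Icc (0:ℝ) N, |𝒲 z| ≤ M :=
    fun N => h𝒲 (Set.Icc 0 N) isCompact_Icc
  by_cases hrex : ∃ r : ℝ, 0 < r ∧ Wp r = 0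
  · obtain ⟨r, hr0, hrW⟩ := hrex
    have hWpr : ∀ t ≤ r, Wp t = 0 := by
      intro t ht
      have h1 : Wp t ≤ Wp r := hWpm t r ht
      have h2 := hWpnn t
      rw [hrW] at h1
      linarith
    intro x hx
    have h := OSG_caseI ha hr0 Wp 𝒲 G hWpr heq hGeq x hx
    rw [hGdef] at h
    exact h
  · push_neg at hrex
    have hWppos : ∀ r : ℝ, 0 < r → 0 < Wp r :=
      fun r h => lt_of_le_of_ne (hWpnn r) (Ne.symm (hrex r h))
    have hind_abs : ∀ z : ℝ, |Set.indicator (Set.Ioo a b) (fun _ => (1:ℝ)) z| ≤ 1 := by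
      intro z
      by_cases h : z ∈ Set.Ioo a b
      · rw [Set.indicator_of_mem h]; norm_num
      · rw [Set.indicator_of_notMem h]; norm_num
    have hassoc : ∀ x : ℝ,
        (fun z => Wp (x - z) * (Set.indicator (Set.Ioo a b) (fun _ => (1:ℝ)) z * 𝒲 z)) =
        fun z => Wp (x - z) * Set.indicator (Set.Ioo a b) (fun _ => (1:ℝ)) z * 𝒲 z := by
      intro x; funext z; ring
    have hg₀ : Measurable fun z => Set.indicator (Set.Ioo a b) (fun _ => (1:ℝ)) z * Wp z :=
      (measurable_const.indicator measurableSet_Ioo).mul hWpcont.measurable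
    have hbdd : ∀ N : ℝ, ∃ M, ∀ z ∈ Set.Icc (0:ℝ) N,
        |Set.indicator (Set.Ioo a b) (fun _ => (1:ℝ)) z * 𝒲 z| ≤ M := by
      intro N
      obtain ⟨M, hM⟩ := h𝒲bdd N
      refine ⟨max M 0, fun z hz => ?_⟩
      rw [abs_mul]
      have h1 := mul_le_mul (hind_abs z) (le_trans (hM z hz) (le_max_left M 0))
        (abs_nonneg (𝒲 z)) zero_le_one
      simpa using h1
    have hforce : ∀ x, 0 ≤ x → ¬ IntervalIntegrable
        (fun z => Wp (x - z) * (Set.indicator (Set.Ioo a b) (fun _ => (1:ℝ)) z * 𝒲 z))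
          volume 0 x →
        Set.indicator (Set.Ioo a b) (fun _ => (1:ℝ)) x * 𝒲 x =
        Set.indicator (Set.Ioo a b) (fun _ => (1:ℝ)) x * Wp x := by
      intro x hx0 hni
      rw [hassoc x] at hni
      have h1 := heq x hx0
      rw [intervalIntegral.integral_undef hni] at h1
      rw [h1]
      ring
    have hallP := OSG_allP hWpcont hWpnn hWpm hWppos hg₀ hbdd hforce
    have hP : ∀ x, 0 ≤ x → IntervalIntegrable
        (fun z => Wp (x - z) * Set.indicator (Set.Ioo a b) (fun _ => (1:ℝ)) z * 𝒲 z)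
          volume 0 x := by
      intro x hx0
      have h1 := hallP x hx0
      rw [← hassoc x]
      exact h1
    intro x hx
    have h := OSG_gronwall ha hab hq Wp 𝒲 G hWpcont hWpnn hWpm hGcont h𝒲bdd hP heq hGeq x hx
    rw [hGdef] at h
    exact h

theorem occupation_scale_global
    (a b p q : ℝ) (ha : 0 < a) (hab : a < b) (hp : 0 ≤ p) (hq : 0 ≤ q)
    (Wp Wpq 𝒲 : ℝ → ℝ)
    (hWpcont : Continuous Wp) (hWpqcont : Continuous Wpq)
    (hWpmono : MonotoneOn Wp (Set.Ici 0)) (hWpqmono : MonotoneOn Wpq (Set.Ici 0))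
    (hWpneg : ∀ x < (0:ℝ), Wp x = 0) (hWpqneg : ∀ x < (0:ℝ), Wpq x = 0)
    (hres : ∀ x ≥ (0:ℝ),
      Wpq x - Wp x = q * ∫ y in (0:ℝ)..x, Wpq (x - y) * Wp y)
    (h𝒲 : LocallyBdd 𝒲)
    (heq : ∀ x ≥ (0:ℝ), 𝒲 x = Wp x +
      q * ∫ z in (0:ℝ)..x, Wp (x - z) * Set.indicator (Set.Ioo a b) (fun _ => (1:ℝ)) z * 𝒲 z) :
    -- with 𝒲_a^{(p,q)}(x) := W^{(p)}(x) + q ∫_a^x W^{(p+q)}(x-y) W^{(p)}(y) dy :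
    (∀ x ≥ (0:ℝ),
      (Wp x + q * ∫ y in a..x, Wpq (x - y) * Wp y) =
        Wp x + q * ∫ z in a..x, Wp (x - z) * (Wp z + q * ∫ y in a..z, Wpq (z - y) * Wp y)) ∧
    (∀ x ≥ (0:ℝ),
      𝒲 x = (Wp x + q * ∫ y in a..x, Wpq (x - y) * Wp y) -
        q * ∫ z in b..x, Wp (x - z) * (Wp z + q * ∫ y in a..z, Wpq (z - y) * Wp y)) := by
  have hWpneg' : ∀ x ≤ (0:ℝ), Wp x = 0 := OSG_zero_nonpos hWpcont hWpneg
  have hWpqneg' : ∀ x ≤ (0:ℝ), Wpq x = 0 := OSG_zero_nonpos hWpqcont hWpqneg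
  have hWpnn : ∀ t, 0 ≤ Wp t := OSG_nonneg hWpcont hWpneg hWpmono
  have hWpm : ∀ s t : ℝ, s ≤ t → Wp s ≤ Wp t := OSG_mono hWpcont hWpneg hWpmono
  have part1 := OSG_part1 (a := a) (q := q) Wp Wpq hWpcont hWpqcont hWpneg' hWpqneg' hres
  refine ⟨part1, ?_⟩
  have hFcont : Continuous fun u => Wp u + q * ∫ y in a..u, Wpq (u - y) * Wp y := by
    apply hWpcont.add
    apply continuous_const.mul
    exact OSG_cont_param (f := fun u y => Wpq (u - y) * Wp y)
      ((hWpqcont.comp (continuous_fst.sub continuous_snd)).mul (hWpcont.comp continuous_snd)) a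
  exact OSG_final ha hab hq Wp
    (fun u => Wp u + q * ∫ y in a..u, Wpq (u - y) * Wp y) 𝒲
    hWpcont hFcont hWpneg' hWpnn hWpm part1 h𝒲 heq
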